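/- For every integer L ≥ 1, every K ∈ {1,…,L}, every ε > 0 and every s ∈ ℝ^L, the smoothed top-K operator approximates the top-K operator with error |top_{K,ε}(s) − top_K(s)| ≤ ε·C_{K,L}, where C_{K,L} = K·√(2 log L). -/

import Mathlib

open MeasureTheory ProbabilityTheory

/-- The list of coordinates of `s : ℝ^L` sorted in decreasing order. -/
noncomputable def descSort {L : ℕ} (s : Fin L → ℝ) : List ℝ :=
  (Multiset.sort (Multiset.map s Finset.univ.val) (· ≤ ·)).reverse

/-- `kthLargest K s` is the `K`-th largest coordinate of `s` (1-indexed), i.e. `s_(K)`. -/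
noncomputable def kthLargest {L : ℕ} (K : ℕ) (s : Fin L → ℝ) : ℝ :=
  (descSort s).getD (K - 1) 0

/-- `topsum K s` is the sum of the `K` largest coordinates of `s`,
with the convention `topsum 0 s = 0`. -/
noncomputable def topsum {L : ℕ} (K : ℕ) (s : Fin L → ℝ) : ℝ :=
  ((descSort s).take K).sum

/-- The standard Gaussian measure `N(0, Id_L)` on `ℝ^L`:
the coordinates are i.i.d. standard normal random variables. -/
noncomputable def stdGaussian (L : ℕ) : Measure (EuclideanSpace ℝ (Fin L)) :=
  Measure.map (WithLp.toLp 2) (Measure.pi (fun _ : Fin L => gaussianReal 0 1))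

/-- The smoothed top-sum `topsumSm K ε s = E[topsum K (s + ε Z)]`, `Z ∼ N(0, Id_L)`. -/
noncomputable def topsumSm {L : ℕ} (K : ℕ) (ε : ℝ) (s : EuclideanSpace ℝ (Fin L)) : ℝ :=
  ∫ z, topsum K (s + ε • z) ∂(stdGaussian L)

/-- The smoothed top-K operator `topSm K ε s = topsumSm K ε s - topsumSm (K-1) ε s`. -/
noncomputable def topSm {L : ℕ} (K : ℕ) (ε : ℝ) (s : EuclideanSpace ℝ (Fin L)) : ℝ :=
  topsumSm K ε s - topsumSm (K - 1) ε s

/-- The 0/1 vector whose entries equal 1 exactly at the `K` coordinates carrying the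
`K` largest values of `v` (well defined when the `K`-th and `(K+1)`-th largest values
of `v` are distinct). -/
noncomputable def argtops {L : ℕ} (K : ℕ) (v : Fin L → ℝ) : Fin L → ℝ :=
  fun i => if kthLargest K v ≤ v i then 1 else 0


open Real Finset
open scoped NNReal ENNReal


lemma descSort_coe {L : ℕ} (v : Fin L → ℝ) :
    (descSort v : Multiset ℝ) = Multiset.map v Finset.univ.val := by
  rw [descSort, Multiset.coe_reverse, Multiset.sort_eq]

lemma descSort_length {L : ℕ} (v : Fin L → ℝ) : (descSort v).length = L := by
  have := congrArg Multiset.card (descSort_coe v)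
  simpa using this

lemma descSort_sorted {L : ℕ} (v : Fin L → ℝ) :
    (descSort v).Pairwise (fun a b => b ≤ a) := by
  rw [descSort, List.pairwise_reverse]
  exact Multiset.pairwise_sort _ _

lemma countA {l : List ℝ} (hl : l.Pairwise (fun a b => b ≤ a)) {j : ℕ} (hj : j < l.length) :
    (l.filter (fun a => l[j] < a)).length ≤ j := by
  have hdrop : ∀ a ∈ l.drop j, a ≤ l[j] := by
    intro a ha
    rw [List.mem_iff_getElem] at ha
    obtain ⟨k, hk, rfl⟩ := ha
    rw [List.getElem_drop]
    rcases Nat.eq_zero_or_pos k with hk0 | hk0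
    · subst hk0; simp
    · exact (List.pairwise_iff_getElem (R := fun a b => b ≤ a)).mp hl j (j+k)
        (by omega) (by rw [List.length_drop] at hk; omega) (by omega)
  calc (l.filter (fun a => l[j] < a)).length
      = ((l.take j ++ l.drop j).filter (fun a => l[j] < a)).length := by
        rw [List.take_append_drop]
    _ = ((l.take j).filter _).length + ((l.drop j).filter (fun a => l[j] < a)).length := by
        rw [List.filter_append, List.length_append]
    _ ≤ j + 0 := by
        gcongr
        · calc ((l.take j).filter _).length ≤ (l.take j).length := List.length_filter_le _ _
            _ ≤ j := by simp [List.length_take]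
        · have : (l.drop j).filter (fun a => l[j] < a) = [] := by
            rw [List.filter_eq_nil_iff]
            intro a ha
            simp only [decide_eq_true_eq, not_lt]
            exact hdrop a ha
          simp [this]
    _ = j := by omega

lemma countB {l : List ℝ} (hl : l.Pairwise (fun a b => b ≤ a)) {j : ℕ} (hj : j < l.length)
    {y : ℝ} (hy : y < l[j]) :
    j + 1 ≤ (l.filter (fun a => y < a)).length := by
  have htake : ∀ a ∈ l.take (j+1), y < a := by
    intro a ha
    rw [List.mem_iff_getElem] at ha
    obtain ⟨k, hk, rfl⟩ := ha
    rw [List.getElem_take]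
    have hkj : k ≤ j := by rw [List.length_take] at hk; omega
    rcases eq_or_lt_of_le hkj with h | h
    · subst h; exact hy
    · have := (List.pairwise_iff_getElem (R := fun a b => b ≤ a)).mp hl k j
        (by omega) hj h
      linarith
  have h1 : (l.take (j+1)).filter (fun a => y < a) = l.take (j+1) := by
    rw [List.filter_eq_self]
    intro a ha; simpa using htake a ha
  have h2 : ((l.take (j+1)).filter (fun a => y < a)).length
      ≤ (l.filter (fun a => y < a)).length :=
    ((l.take_sublist (j+1)).filter _).length_le
  rw [h1, List.length_take] at h2
  omega

lemma count_transfer {L : ℕ} (v : Fin L → ℝ) (y : ℝ) :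
    ((descSort v).filter (fun a => y < a)).length
      = (univ.filter (fun i => y < v i)).card := by
  classical
  have h1 : (((descSort v) : Multiset ℝ).filter (fun a => y < a)).card
      = ((descSort v).filter (fun a => y < a)).length := by
    simp [Multiset.filter_coe]
  rw [← h1, descSort_coe, Multiset.filter_map, Multiset.card_map, Finset.card_def,
    Finset.filter_val]
  rfl

lemma kthLargest_eq_getElem {L : ℕ} {K : ℕ} (hK1 : 1 ≤ K) (hKL : K ≤ L) (v : Fin L → ℝ) :
    kthLargest K v = (descSort v)[K-1]'(by rw [descSort_length]; omega) := by
  rw [kthLargest, List.getD_eq_getElem]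

/-- count version A for kthLargest -/
lemma card_lt_kth {L : ℕ} {K : ℕ} (hK1 : 1 ≤ K) (hKL : K ≤ L) (v : Fin L → ℝ) :
    (univ.filter (fun i => kthLargest K v < v i)).card ≤ K - 1 := by
  rw [← count_transfer, kthLargest_eq_getElem hK1 hKL]
  exact countA (descSort_sorted v) (by rw [descSort_length]; omega)

lemma card_lt_of_lt_kth {L : ℕ} {K : ℕ} (hK1 : 1 ≤ K) (hKL : K ≤ L) (v : Fin L → ℝ)
    {y : ℝ} (hy : y < kthLargest K v) :
    K ≤ (univ.filter (fun i => y < v i)).card := by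
  rw [← count_transfer]
  rw [kthLargest_eq_getElem hK1 hKL] at hy
  have := countB (descSort_sorted v) (by rw [descSort_length]; omega : K - 1 < (descSort v).length) hy
  omega

/-- Key monotone-perturbation inequality. -/
lemma kth_le_add {L : ℕ} {K : ℕ} (hK1 : 1 ≤ K) (hKL : K ≤ L) (v w : Fin L → ℝ) {m : ℝ}
    (hm : ∀ i, v i ≤ w i + m) :
    kthLargest K v ≤ kthLargest K w + m := by
  by_contra h
  push_neg at h
  have h1 : K ≤ (univ.filter (fun i => kthLargest K w + m < v i)).card :=
    card_lt_of_lt_kth hK1 hKL v h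
  have h2 : (univ.filter (fun i => kthLargest K w + m < v i)).card
      ≤ (univ.filter (fun i => kthLargest K w < w i)).card := by
    apply Finset.card_le_card
    intro i hi
    simp only [Finset.mem_filter, Finset.mem_univ, true_and] at hi ⊢
    have := hm i
    linarith
  have h3 := card_lt_kth hK1 hKL w
  omega

/-- kthLargest is a value of v. -/
lemma kth_mem {L : ℕ} {K : ℕ} (hK1 : 1 ≤ K) (hKL : K ≤ L) (v : Fin L → ℝ) :
    ∃ i, kthLargest K v = v i := by
  rw [kthLargest_eq_getElem hK1 hKL]
  have hmem : (descSort v)[K-1]'(by rw [descSort_length]; omega) ∈ descSort v :=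
    List.getElem_mem _
  rw [← Multiset.mem_coe, descSort_coe, Multiset.mem_map] at hmem
  obtain ⟨i, _, hi⟩ := hmem
  exact ⟨i, hi.symm⟩

lemma topsum_eq_sum_range {L : ℕ} (K : ℕ) (v : Fin L → ℝ) :
    topsum K v = ∑ j ∈ Finset.range K, kthLargest (j+1) v := by
  induction K with
  | zero => simp [topsum]
  | succ n ih =>
    rw [Finset.sum_range_succ, ← ih, topsum, topsum]
    rcases lt_or_ge n (descSort v).length with h | h
    · rw [List.sum_take_succ _ _ h, kthLargest, Nat.add_sub_cancel, List.getD_eq_getElem _ _ h]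
    · rw [List.take_of_length_le h, List.take_of_length_le (by omega),
        kthLargest, Nat.add_sub_cancel, List.getD_eq_default _ _ h, add_zero]

lemma topsum_sub_topsum {L : ℕ} {K : ℕ} (hK1 : 1 ≤ K) (v : Fin L → ℝ) :
    topsum K v - topsum (K-1) v = kthLargest K v := by
  obtain ⟨n, rfl⟩ : ∃ n, K = n + 1 := ⟨K - 1, by omega⟩
  rw [topsum_eq_sum_range, topsum_eq_sum_range, Nat.add_sub_cancel, Finset.sum_range_succ]
  ring

lemma gaussianReal_eq_withDensity :
    gaussianReal 0 1 = MeasureTheory.Measure.withDensity volume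
      (fun x => ((gaussianPDFReal 0 1 x).toNNReal : ENNReal)) := by
  rw [gaussianReal_of_var_ne_zero _ one_ne_zero]
  rfl

lemma integral_gaussianReal_eq (g : ℝ → ℝ) :
    ∫ x, g x ∂(gaussianReal 0 1) = ∫ x, gaussianPDFReal 0 1 x * g x := by
  rw [gaussianReal_eq_withDensity,
    integral_withDensity_eq_integral_smul (measurable_gaussianPDFReal 0 1).real_toNNReal]
  congr 1
  ext x
  simp [NNReal.smul_def, Real.coe_toNNReal _ (gaussianPDFReal_nonneg 0 1 x)]

lemma integrable_gaussianReal_iff (g : ℝ → ℝ) :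
    Integrable g (gaussianReal 0 1) ↔ Integrable (fun x => gaussianPDFReal 0 1 x * g x) := by
  rw [gaussianReal_eq_withDensity,
    integrable_withDensity_iff_integrable_smul (measurable_gaussianPDFReal 0 1).real_toNNReal]
  constructor <;> intro h <;> refine h.congr (Filter.Eventually.of_forall fun x => ?_) <;>
    simp [NNReal.smul_def, Real.coe_toNNReal _ (gaussianPDFReal_nonneg 0 1 x)]
lemma pdf_mul_exp (a x : ℝ) :
    gaussianPDFReal 0 1 x * rexp (a * x) = rexp (a^2/2) * gaussianPDFReal a 1 x := by
  simp only [gaussianPDFReal]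
  calc (√(2 * π * (1:ℝ≥0)))⁻¹ * rexp (-(x - 0) ^ 2 / (2 * (1:ℝ≥0))) * rexp (a * x)
      = (√(2 * π * (1:ℝ≥0)))⁻¹ * rexp (-(x - 0) ^ 2 / (2 * (1:ℝ≥0)) + a * x) := by
        rw [mul_assoc, ← Real.exp_add]
    _ = (√(2 * π * (1:ℝ≥0)))⁻¹ * rexp (a^2/2 + -(x - a) ^ 2 / (2 * (1:ℝ≥0))) := by
        congr 1
        push_cast
        ring
    _ = rexp (a ^ 2 / 2) * ((√(2 * π * (1:ℝ≥0)))⁻¹ * rexp (-(x - a) ^ 2 / (2 * (1:ℝ≥0)))) := by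
        rw [Real.exp_add]; ring

lemma pdf_even (x : ℝ) : gaussianPDFReal 0 1 (-x) = gaussianPDFReal 0 1 x := by
  simp only [gaussianPDFReal]
  congr 2
  ring

lemma pdf_bound (x : ℝ) :
    gaussianPDFReal 0 1 x = (√(2 * Real.pi))⁻¹ * rexp (-(2⁻¹) * x^2) := by
  simp only [gaussianPDFReal]
  push_cast
  rw [mul_one, mul_one]
  congr 1
  ring

lemma integrable_id_gauss : Integrable (fun x : ℝ => x) (gaussianReal 0 1) := by
  rw [integrable_gaussianReal_iff]
  have h : Integrable (fun x : ℝ => (√(2 * Real.pi))⁻¹ * |x * rexp (-(2⁻¹) * x^2)|) volume :=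
    ((integrable_mul_exp_neg_mul_sq (by norm_num : (0:ℝ) < 2⁻¹)).abs).const_mul _
  refine h.mono' ?_ (Filter.Eventually.of_forall fun x => ?_)
  · exact ((measurable_gaussianPDFReal 0 1).mul measurable_id).aestronglyMeasurable
  · have hC : |(√(2 * Real.pi))⁻¹| = (√(2 * Real.pi))⁻¹ := abs_of_nonneg (by positivity)
    have hE : |rexp (-(2⁻¹) * x^2)| = rexp (-(2⁻¹)*x^2) := abs_of_nonneg (Real.exp_nonneg _)
    rw [pdf_bound, Real.norm_eq_abs, abs_mul, abs_mul, abs_mul, hC, hE]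
    exact le_of_eq (by ring)

lemma integral_id_gauss : ∫ x, x ∂(gaussianReal 0 1) = 0 := by
  rw [integral_gaussianReal_eq]
  have h := MeasureTheory.integral_neg_eq_self (fun x => gaussianPDFReal 0 1 x * x) volume
  have h2 : ∀ x : ℝ, gaussianPDFReal 0 1 (-x) * (-x) = -(gaussianPDFReal 0 1 x * x) := by
    intro x; rw [pdf_even]; ring
  simp_rw [h2] at h
  rw [integral_neg] at h
  linarith

lemma integrable_exp_gauss (a : ℝ) :
    Integrable (fun x : ℝ => rexp (a * x)) (gaussianReal 0 1) := by
  rw [integrable_gaussianReal_iff]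
  simp_rw [pdf_mul_exp]
  exact (integrable_gaussianPDFReal a 1).const_mul _

lemma integral_exp_gauss (a : ℝ) :
    ∫ x, rexp (a * x) ∂(gaussianReal 0 1) = rexp (a^2/2) := by
  rw [integral_gaussianReal_eq]
  simp_rw [pdf_mul_exp]
  rw [integral_const_mul, integral_gaussianPDFReal_eq_one a one_ne_zero, mul_one]

instance stdGaussian_prob (L : ℕ) : IsProbabilityMeasure (stdGaussian L) :=
  Measure.isProbabilityMeasure_map (WithLp.measurable_toLp 2 _).aemeasurable

lemma measurable_eval {L : ℕ} (i : Fin L) :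
    Measurable (fun z : EuclideanSpace ℝ (Fin L) => z i) :=
  (measurable_pi_apply i).comp (WithLp.measurable_ofLp 2 _)

lemma continuous_eval {L : ℕ} (i : Fin L) :
    Continuous (fun z : EuclideanSpace ℝ (Fin L) => z i) :=
  (EuclideanSpace.proj (𝕜 := ℝ) i).continuous

lemma pi_map_eval {L : ℕ} (i : Fin L) :
    (Measure.pi fun _ : Fin L => gaussianReal 0 1).map (fun z : Fin L → ℝ => z i)
      = gaussianReal 0 1 := by
  ext s hs
  rw [Measure.map_apply (measurable_pi_apply i) hs]
  have : (fun z : Fin L → ℝ => z i) ⁻¹' s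
      = Set.pi Set.univ (Function.update (fun _ : Fin L => (Set.univ : Set ℝ)) i s) := by
    classical
    exact Set.eval_preimage
  rw [this, Measure.pi_pi]
  classical
  rw [Finset.prod_eq_single i]
  · simp
  · intro j _ hj; simp [Function.update_of_ne hj]
  · simp

lemma stdGaussian_map_eval {L : ℕ} (i : Fin L) :
    (stdGaussian L).map (fun z => z i) = gaussianReal 0 1 := by
  rw [_root_.stdGaussian, Measure.map_map (measurable_eval i) (WithLp.measurable_toLp 2 _)]
  exact pi_map_eval i
section Sec4
variable {L : ℕ}

lemma integrable_comp_eval (i : Fin L) {f : ℝ → ℝ}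
    (h : Integrable f (gaussianReal 0 1)) :
    Integrable (fun z : EuclideanSpace ℝ (Fin L) => f (z i)) (stdGaussian L) := by
  have hf := h.aestronglyMeasurable
  rw [← stdGaussian_map_eval i] at h
  exact (integrable_map_measure (by rwa [stdGaussian_map_eval i])
    (measurable_eval i).aemeasurable).mp h

lemma integral_comp_eval (i : Fin L) {f : ℝ → ℝ}
    (hf : AEStronglyMeasurable f (gaussianReal 0 1)) :
    ∫ z, f (z i) ∂(stdGaussian L) = ∫ x, f x ∂(gaussianReal 0 1) := by
  conv_rhs => rw [← stdGaussian_map_eval i]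
  rw [integral_map (measurable_eval i).aemeasurable (by rwa [stdGaussian_map_eval i])]

lemma integrable_abs_eval (i : Fin L) :
    Integrable (fun z : EuclideanSpace ℝ (Fin L) => |z i|) (stdGaussian L) :=
  integrable_comp_eval i integrable_id_gauss.abs

lemma integral_id_eval (i : Fin L) :
    ∫ z, z i ∂(stdGaussian L) = 0 := by
  rw [integral_comp_eval i (f := fun x => x) measurable_id.aestronglyMeasurable,
    integral_id_gauss]

lemma integral_exp_eval (i : Fin L) (a : ℝ) :
    ∫ z, rexp (a * z i) ∂(stdGaussian L) = rexp (a^2/2) := by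
  rw [integral_comp_eval i (f := fun x => rexp (a * x))
    (Real.measurable_exp.comp (measurable_id.const_mul a)).aestronglyMeasurable,
    integral_exp_gauss]

/-- Gaussian maximal inequality. -/
lemma integral_sup_le (hL : 1 ≤ L) (c : Fin L → ℝ) (hc : ∀ i, c i = 1 ∨ c i = -1) :
    ∫ z, univ.sup' (univ_nonempty_iff.mpr ⟨⟨0, hL⟩⟩) (fun i => c i * z i) ∂(stdGaussian L)
      ≤ Real.sqrt (2 * Real.log L) := by
  have hne : (univ : Finset (Fin L)).Nonempty := univ_nonempty_iff.mpr ⟨⟨0, hL⟩⟩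
  set μ := stdGaussian L
  set M : EuclideanSpace ℝ (Fin L) → ℝ := fun z => univ.sup' hne (fun i => c i * z i) with hM
  have hMz : ∀ z, M z = univ.sup' hne (fun i => c i * z i) := fun z => rfl
  have hMmeas : Measurable M := by
    have : M = univ.sup' hne (fun i => fun z : EuclideanSpace ℝ (Fin L) => c i * z i) := by
      funext z
      rw [hMz, Finset.sup'_apply]
    rw [this]
    exact Finset.measurable_sup' hne (fun i _ => (measurable_eval i).const_mul _)
  have habs : ∀ z, ‖M z‖ ≤ ∑ i, |z i| := by
    intro z
    obtain ⟨i0, _, h0⟩ := Finset.exists_mem_eq_sup' hne (fun i => c i * z i)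
    rw [Real.norm_eq_abs, hMz, h0, abs_mul]
    rcases hc i0 with h | h <;>
      · rw [h]
        simpa using Finset.single_le_sum (f := fun i => |z i|)
          (fun i _ => abs_nonneg _) (Finset.mem_univ i0)
  have hsum_int : Integrable (fun z : EuclideanSpace ℝ (Fin L) => ∑ i, |z i|) μ :=
    integrable_finset_sum _ (fun i _ => integrable_abs_eval i)
  have hMint : Integrable M μ :=
    hsum_int.mono' hMmeas.aestronglyMeasurable (Filter.Eventually.of_forall habs)
  show ∫ z, M z ∂μ ≤ Real.sqrt (2 * Real.log L)
  rcases eq_or_lt_of_le hL with h1 | h2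
  · -- L = 1
    have hL1 : L = 1 := h1.symm
    subst hL1
    have hM1 : ∀ z : EuclideanSpace ℝ (Fin 1), M z = c 0 * z 0 := by
      intro z
      rw [hMz]
      apply le_antisymm
      · apply Finset.sup'_le
        intro i _
        rw [Fin.eq_zero i]
      · exact Finset.le_sup' (fun i : Fin 1 => c i * z i) (Finset.mem_univ (0 : Fin 1))
    calc ∫ z, M z ∂μ = ∫ z : EuclideanSpace ℝ (Fin 1), c 0 * z 0 ∂μ := by
          rw [show M = fun z : EuclideanSpace ℝ (Fin 1) => c 0 * z 0 from funext hM1]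
      _ = c 0 * ∫ z : EuclideanSpace ℝ (Fin 1), z 0 ∂μ := integral_const_mul _ _
      _ = 0 := by rw [integral_id_eval 0, mul_zero]
      _ ≤ Real.sqrt (2 * Real.log 1) := by
          rw [Real.log_one, mul_zero, Real.sqrt_zero]
      _ = Real.sqrt (2 * Real.log (1:ℕ)) := by norm_num
  · -- L ≥ 2
    have hL2 : (2:ℝ) ≤ (L:ℝ) := by exact_mod_cast h2
    have hlog : 0 < Real.log L := Real.log_pos (by linarith)
    set t : ℝ := Real.sqrt (2 * Real.log L) with ht
    have htpos : 0 < t := Real.sqrt_pos.mpr (by linarith)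
    have ht2 : t^2 = 2 * Real.log L := Real.sq_sqrt (by linarith)
    have hptw : ∀ z : EuclideanSpace ℝ (Fin L),
        rexp (t * M z) ≤ ∑ i, rexp (t * (c i * z i)) := by
      intro z
      obtain ⟨i0, _, h0⟩ := Finset.exists_mem_eq_sup' hne (fun i => c i * z i)
      rw [hMz, h0]
      exact Finset.single_le_sum (f := fun i => rexp (t * (c i * z i)))
        (fun i _ => (Real.exp_pos _).le) (Finset.mem_univ i0)
    have hexp_int : ∀ i : Fin L,
        Integrable (fun z : EuclideanSpace ℝ (Fin L) => rexp (t * (c i * z i))) μ := by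
      intro i
      have : (fun z : EuclideanSpace ℝ (Fin L) => rexp (t * (c i * z i)))
          = fun z => rexp ((t * c i) * z i) := by funext z; ring_nf
      rw [this]
      exact integrable_comp_eval i (integrable_exp_gauss (t * c i))
    have hsum_exp_int : Integrable (fun z : EuclideanSpace ℝ (Fin L) =>
        ∑ i, rexp (t * (c i * z i))) μ := integrable_finset_sum _ (fun i _ => hexp_int i)
    have hexpM_int : Integrable (fun z => rexp (t * M z)) μ := by
      refine hsum_exp_int.mono' ((Real.measurable_exp.comp
        (hMmeas.const_mul t)).aestronglyMeasurable) (Filter.Eventually.of_forall fun z => ?_)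
      rw [Real.norm_eq_abs, abs_of_pos (Real.exp_pos _)]
      exact hptw z
    have hjensen : rexp (∫ z, t * M z ∂μ) ≤ ∫ z, rexp (t * M z) ∂μ :=
      ConvexOn.map_integral_le (μ := μ) (s := Set.univ) (f := fun z => t * M z)
        (g := rexp) convexOn_exp Real.continuous_exp.continuousOn isClosed_univ
        (Filter.Eventually.of_forall fun x => Set.mem_univ _) (hMint.const_mul t) hexpM_int
    have hchain : ∫ z, rexp (t * M z) ∂μ ≤ (L:ℝ) * rexp (t^2/2) := by
      calc ∫ z, rexp (t * M z) ∂μ ≤ ∫ z, ∑ i, rexp (t * (c i * z i)) ∂μ :=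
            integral_mono hexpM_int hsum_exp_int hptw
        _ = ∑ i : Fin L, ∫ z, rexp (t * (c i * z i)) ∂μ :=
            integral_finset_sum _ (fun i _ => hexp_int i)
        _ = ∑ i : Fin L, rexp ((t * c i)^2/2) := by
            refine Finset.sum_congr rfl fun i _ => ?_
            have : (fun z : EuclideanSpace ℝ (Fin L) => rexp (t * (c i * z i)))
                = fun z => rexp ((t * c i) * z i) := by funext z; ring_nf
            rw [this, integral_exp_eval]
        _ = (L:ℝ) * rexp (t^2/2) := by
            have hci : ∀ i : Fin L, (t * c i)^2 = t^2 := by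
              intro i; rcases hc i with h | h <;> rw [h] <;> ring
            simp_rw [hci]
            simp [mul_comm]
    have hIM : ∫ z, t * M z ∂μ = t * ∫ z, M z ∂μ := integral_const_mul _ _
    have hfin : rexp (t * ∫ z, M z ∂μ) ≤ rexp (Real.log L + t^2/2) := by
      rw [← hIM]
      refine hjensen.trans (hchain.trans ?_)
      rw [Real.exp_add, Real.exp_log (by linarith : (0:ℝ) < (L:ℝ))]
    have hle := Real.exp_le_exp.mp hfin
    have hlt : Real.log L = t^2/2 := by rw [ht2]; ring
    have : t * ∫ z, M z ∂μ ≤ t * t := by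
      calc t * ∫ z, M z ∂μ ≤ Real.log L + t^2/2 := hle
        _ = t * t := by rw [hlt]; ring
    exact le_of_mul_le_mul_left (by linarith) htpos

end Sec4

section Sec5
lemma kth_continuous {K : ℕ} (hK1 : 1 ≤ K) (hKL : K ≤ L) :
    Continuous (fun v : Fin L → ℝ => kthLargest K v) := by
  have hlip : LipschitzWith 1 (fun v : Fin L → ℝ => kthLargest K v) := by
    apply LipschitzWith.of_dist_le_mul
    intro v w
    rw [NNReal.coe_one, one_mul, Real.dist_eq, abs_sub_le_iff]
    constructor
    · have := kth_le_add hK1 hKL v w (m := dist v w) (fun i => by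
        have h1 : v i - w i ≤ dist v w := by
          have := dist_le_pi_dist v w i
          rw [Real.dist_eq] at this
          calc v i - w i ≤ |v i - w i| := le_abs_self _
            _ ≤ dist v w := this
        linarith)
      linarith
    · have := kth_le_add hK1 hKL w v (m := dist v w) (fun i => by
        have h1 : w i - v i ≤ dist v w := by
          have := dist_le_pi_dist v w i
          rw [Real.dist_eq] at this
          calc w i - v i ≤ |v i - w i| := by
                rw [abs_sub_comm]; exact le_abs_self _
            _ ≤ dist v w := this
        linarith)
      linarith
  exact hlip.continuous

/-- Integrability of the sup used for domination. -/
lemma integrable_sup_c (hL : 1 ≤ L) (c : Fin L → ℝ) (hc : ∀ i, c i = 1 ∨ c i = -1) :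
    Integrable (fun z : EuclideanSpace ℝ (Fin L) =>
      univ.sup' (univ_nonempty_iff.mpr ⟨⟨0, hL⟩⟩) (fun i => c i * z i)) (stdGaussian L) := by
  have hne : (univ : Finset (Fin L)).Nonempty := univ_nonempty_iff.mpr ⟨⟨0, hL⟩⟩
  have hMmeas : Measurable (fun z : EuclideanSpace ℝ (Fin L) =>
      univ.sup' hne (fun i => c i * z i)) := by
    have : (fun z : EuclideanSpace ℝ (Fin L) => univ.sup' hne (fun i => c i * z i))
        = univ.sup' hne (fun i => fun z : EuclideanSpace ℝ (Fin L) => c i * z i) := by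
      funext z
      rw [Finset.sup'_apply]
    rw [this]
    exact Finset.measurable_sup' hne (fun i _ => (measurable_eval i).const_mul _)
  refine (integrable_finset_sum univ (fun i (_ : i ∈ univ) => integrable_abs_eval i)).mono'
    hMmeas.aestronglyMeasurable (Filter.Eventually.of_forall fun z => ?_)
  obtain ⟨i0, _, h0⟩ := Finset.exists_mem_eq_sup' hne (fun i => c i * z i)
  rw [Real.norm_eq_abs, h0, abs_mul]
  rcases hc i0 with h | h <;>
    · rw [h]
      simpa using Finset.single_le_sum (f := fun i => |z i|)
        (fun i _ => abs_nonneg _) (Finset.mem_univ i0)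

end Sec5


/-- `|topSm K ε s - top_K s| ≤ ε·C_{K,L}` with `C_{K,L} = K√(2 log L)`. -/
theorem abs_topSm_sub_top_le (L K : ℕ) (hL : 1 ≤ L) (hK1 : 1 ≤ K) (hKL : K ≤ L)
    (ε : ℝ) (hε : 0 < ε) (s : EuclideanSpace ℝ (Fin L)) :
    |topSm K ε s - kthLargest K s| ≤ ε * ((K : ℝ) * Real.sqrt (2 * Real.log L)) := by
  classical
  set μ := stdGaussian L with hμ
  have hne : (univ : Finset (Fin L)).Nonempty := univ_nonempty_iff.mpr ⟨⟨0, hL⟩⟩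
  -- the perturbed vector
  have hw : ∀ z : EuclideanSpace ℝ (Fin L),
      (s + ε • z : EuclideanSpace ℝ (Fin L)) = (fun i => s i + ε * z i) := by
    intro z
    funext i
    simp [PiLp.add_apply, PiLp.smul_apply, smul_eq_mul]
  -- integrability of each order statistic of the perturbed vector
  have hkint : ∀ j : ℕ, 1 ≤ j → j ≤ L →
      Integrable (fun z : EuclideanSpace ℝ (Fin L) =>
        kthLargest j (fun i => s i + ε * z i)) μ := by
    intro j hj1 hjL
    have hcont : Continuous (fun z : EuclideanSpace ℝ (Fin L) =>
        kthLargest j (fun i => s i + ε * z i)) := by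
      apply (kth_continuous hj1 hjL).comp
      exact continuous_pi fun i => continuous_const.add (continuous_const.mul (continuous_eval i))
    refine (integrable_finset_sum univ (fun i (_ : i ∈ univ) =>
        (integrable_const |s i|).add ((integrable_abs_eval i).const_mul ε))).mono'
      hcont.aestronglyMeasurable (Filter.Eventually.of_forall fun z => ?_)
    obtain ⟨i0, h0⟩ := kth_mem hj1 hjL (fun i => s i + ε * z i)
    rw [Real.norm_eq_abs, h0]
    calc |s i0 + ε * z i0| ≤ |s i0| + ε * |z i0| := by
          refine (abs_add_le _ _).trans ?_
          rw [abs_mul, abs_of_pos hε]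
      _ ≤ ∑ i, (|s i| + ε * |z i|) :=
          Finset.single_le_sum (f := fun i => |s i| + ε * |z i|)
            (fun i _ => by positivity) (Finset.mem_univ i0)
  -- step 1 : topSm is the integral of the K-th largest of the perturbed vector
  have hstep1 : topSm K ε s = ∫ z, kthLargest K (fun i => s i + ε * z i) ∂μ := by
    have hsm : ∀ J : ℕ, topsumSm J ε s
        = ∫ z, topsum J (fun i => s i + ε * z i) ∂μ := by
      intro J
      rw [topsumSm]
      exact integral_congr_ae (Filter.Eventually.of_forall fun z => congrArg (topsum J) (hw z))
    rw [topSm, hsm, hsm]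
    have hintK : ∀ J : ℕ, J ≤ L → Integrable (fun z : EuclideanSpace ℝ (Fin L) =>
        topsum J (fun i => s i + ε * z i)) μ := by
      intro J hJ
      have : (fun z : EuclideanSpace ℝ (Fin L) => topsum J (fun i => s i + ε * z i))
          = fun z => ∑ j ∈ Finset.range J, kthLargest (j+1) (fun i => s i + ε * z i) := by
        funext z; exact topsum_eq_sum_range J _
      rw [this]
      refine integrable_finset_sum _ (fun j hj => ?_)
      rw [Finset.mem_range] at hj
      exact hkint (j+1) (by omega) (by omega)
    rw [← integral_sub (hintK K hKL) (hintK (K-1) (by omega))]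
    congr 1
    funext z
    exact topsum_sub_topsum hK1 _
  -- notation
  set T : ℝ := kthLargest K s with hT
  set I : ℝ := ∫ z, kthLargest K (fun i => s i + ε * z i) ∂μ with hI
  have hkK := hkint K hK1 hKL
  have hsqrt : (0:ℝ) ≤ Real.sqrt (2 * Real.log L) := Real.sqrt_nonneg _
  -- upper bound
  have hub : I - T ≤ ε * Real.sqrt (2 * Real.log L) := by
    have hM := integrable_sup_c hL (fun _ => 1) (fun _ => Or.inl rfl)
    have hptw : ∀ z : EuclideanSpace ℝ (Fin L),
        kthLargest K (fun i => s i + ε * z i) - T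
          ≤ ε * univ.sup' (univ_nonempty_iff.mpr ⟨⟨0, hL⟩⟩) (fun i => (fun _ => (1:ℝ)) i * z i) := by
      intro z
      have := kth_le_add hK1 hKL (fun i => s i + ε * z i) s
        (m := ε * univ.sup' (univ_nonempty_iff.mpr ⟨⟨0, hL⟩⟩) (fun i => (fun _ => (1:ℝ)) i * z i))
        (fun i => by
          dsimp only
          have h1 : z i ≤ univ.sup' (univ_nonempty_iff.mpr ⟨⟨0, hL⟩⟩)
              (fun i => (fun _ => (1:ℝ)) i * z i) := by
            have := Finset.le_sup' (fun i => (fun _ => (1:ℝ)) i * z i) (Finset.mem_univ i)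
            simpa only [one_mul] using this
          have := mul_le_mul_of_nonneg_left h1 hε.le
          linarith)
      rw [← hT] at this
      linarith
    have h1 : I - T = ∫ z, (kthLargest K (fun i => s i + ε * z i) - T) ∂μ := by
      rw [integral_sub hkK (integrable_const T), integral_const]
      simp [measure_univ, hI]
    rw [h1]
    calc ∫ z, (kthLargest K (fun i => s i + ε * z i) - T) ∂μ
        ≤ ∫ z, ε * univ.sup' (univ_nonempty_iff.mpr ⟨⟨0, hL⟩⟩)
            (fun i => (fun _ => (1:ℝ)) i * z i) ∂μ :=
          integral_mono (hkK.sub (integrable_const T)) (hM.const_mul ε) hptw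
      _ = ε * ∫ z, univ.sup' (univ_nonempty_iff.mpr ⟨⟨0, hL⟩⟩)
            (fun i => (fun _ => (1:ℝ)) i * z i) ∂μ := integral_const_mul _ _
      _ ≤ ε * Real.sqrt (2 * Real.log L) := by
          have := integral_sup_le hL (fun _ => (1:ℝ)) (fun _ => Or.inl rfl)
          exact mul_le_mul_of_nonneg_left this hε.le
  -- lower bound
  have hlb : T - I ≤ ε * Real.sqrt (2 * Real.log L) := by
    have hM := integrable_sup_c hL (fun _ => -1) (fun _ => Or.inr rfl)
    have hptw : ∀ z : EuclideanSpace ℝ (Fin L),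
        T - kthLargest K (fun i => s i + ε * z i)
          ≤ ε * univ.sup' (univ_nonempty_iff.mpr ⟨⟨0, hL⟩⟩)
              (fun i => (fun _ => (-1:ℝ)) i * z i) := by
      intro z
      have := kth_le_add hK1 hKL s (fun i => s i + ε * z i)
        (m := ε * univ.sup' (univ_nonempty_iff.mpr ⟨⟨0, hL⟩⟩)
          (fun i => (fun _ => (-1:ℝ)) i * z i))
        (fun i => by
          dsimp only
          have h1 : -z i ≤ univ.sup' (univ_nonempty_iff.mpr ⟨⟨0, hL⟩⟩)
              (fun i => (fun _ => (-1:ℝ)) i * z i) := by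
            have := Finset.le_sup' (fun i => (fun _ => (-1:ℝ)) i * z i) (Finset.mem_univ i)
            simpa only [neg_one_mul] using this
          have := mul_le_mul_of_nonneg_left h1 hε.le
          linarith)
      rw [← hT] at this
      linarith
    have h1 : T - I = ∫ z, (T - kthLargest K (fun i => s i + ε * z i)) ∂μ := by
      rw [integral_sub (integrable_const T) hkK, integral_const]
      simp [measure_univ, hI]
    rw [h1]
    calc ∫ z, (T - kthLargest K (fun i => s i + ε * z i)) ∂μ
        ≤ ∫ z, ε * univ.sup' (univ_nonempty_iff.mpr ⟨⟨0, hL⟩⟩)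
            (fun i => (fun _ => (-1:ℝ)) i * z i) ∂μ :=
          integral_mono ((integrable_const T).sub hkK) (hM.const_mul ε) hptw
      _ = ε * ∫ z, univ.sup' (univ_nonempty_iff.mpr ⟨⟨0, hL⟩⟩)
            (fun i => (fun _ => (-1:ℝ)) i * z i) ∂μ := integral_const_mul _ _
      _ ≤ ε * Real.sqrt (2 * Real.log L) := by
          have := integral_sup_le hL (fun _ => (-1:ℝ)) (fun _ => Or.inr rfl)
          exact mul_le_mul_of_nonneg_left this hε.le
  -- conclusion
  rw [hstep1]
  have hK' : (1:ℝ) ≤ (K:ℝ) := by exact_mod_cast hK1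
  have hfinal : ε * Real.sqrt (2 * Real.log L) ≤ ε * ((K:ℝ) * Real.sqrt (2 * Real.log L)) := by
    nlinarith
  rw [abs_sub_le_iff]
  constructor <;> linarith
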